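/- arXiv:1109.3280 — 3 statements merged into one kernel-verified Lean document; each statement's English description precedes it below -/
import Mathlib

section
/- Let s : ℝ^n → ℝ^d be a Lipschitz map and let Z = {(x, s(x)) : x ∈ ℝ^n} ⊆ ℝ^n × ℝ^d be its graph. Assume that for every x ∈ ℝ^n there is an n-dimensional linear subspace D_x of ℝ^n × ℝ^d containing the tangent cone TC_{(x,s(x))} Z. Then s is differentiable at every x, D_x = {(v, Ds_x(v)) : v ∈ ℝ^n} is the graph of the derivative Ds_x, and if moreover the map x ↦ D_x is continuous (equivalently, writing D_x as the graph of a linear map L_x : ℝ^n → ℝ^d, the map x ↦ L_x is continuous), then s is continuously differentiable (of class C^1). -/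
open Filter Set

/-- Tangent cone of a set `Z ⊆ E` at a point `z`: the set consisting of `0` together with
all vectors `v = α • lim (zₙ − z)/‖zₙ − z‖` for some `α ∈ ℝ` and some sequence
`zₙ ∈ Z \ {z}` converging to `z`. -/
def paperTangentCone {E : Type*} [NormedAddCommGroup E] [NormedSpace ℝ E]
    (Z : Set E) (z : E) : Set E :=
  {0} ∪ {v | ∃ (α : ℝ) (w : E) (c : ℕ → E),
    (∀ k, c k ∈ Z \ {z}) ∧ Tendsto c atTop (nhds z) ∧
    Tendsto (fun k => ‖c k - z‖⁻¹ • (c k - z)) atTop (nhds w) ∧ v = α • w}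

lemma mem_paperTangentCone_of_seq {E : Type*} [NormedAddCommGroup E] [NormedSpace ℝ E]
    {Z : Set E} {z w : E} {c : ℕ → E} (hc : ∀ k, c k ∈ Z \ {z})
    (hz : Tendsto c atTop (nhds z))
    (hw : Tendsto (fun k => ‖c k - z‖⁻¹ • (c k - z)) atTop (nhds w)) :
    w ∈ paperTangentCone Z z :=
  Or.inr ⟨1, w, c, hc, hz, hw, (one_smul ℝ w).symm⟩

theorem aux_graph {E F : Type*} [NormedAddCommGroup E] [NormedSpace ℝ E]
    [NormedAddCommGroup F] [NormedSpace ℝ F]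
    [FiniteDimensional ℝ E] [FiniteDimensional ℝ F]
    {s : E → F} {K : NNReal} (hK : LipschitzWith K s)
    (Dx : Submodule ℝ (E × F)) (hdim : Module.finrank ℝ Dx = Module.finrank ℝ E)
    (x : E)
    (hTC : paperTangentCone {p : E × F | p.2 = s p.1} (x, s x) ⊆ Dx) :
    ∃ L : E →L[ℝ] F, (∀ p : E × F, p ∈ Dx ↔ p.2 = L p.1) ∧ HasFDerivAt s L x := by
  set Z : Set (E × F) := {p : E × F | p.2 = s p.1} with hZ
  set z : E × F := (x, s x) with hz
  set M : ℝ := max 1 (K : ℝ) with hM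
  have hM1 : (1:ℝ) ≤ M := le_max_left _ _
  have hM0 : (0:ℝ) < M := lt_of_lt_of_le one_pos hM1
  -- generic compactness extraction
  have key : ∀ (c : ℕ → E × F), (∀ k, c k ∈ Z \ {z}) → Tendsto c atTop (nhds z) →
      ∃ w ∈ Dx, ‖w‖ = 1 ∧ ∃ φ : ℕ → ℕ, StrictMono φ ∧
        Tendsto (fun k => ‖c (φ k) - z‖⁻¹ • (c (φ k) - z)) atTop (nhds w) := by
    intro c hc hcz
    have hunit : ∀ k, (‖c k - z‖⁻¹ • (c k - z)) ∈ Metric.sphere (0 : E × F) 1 := by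
      intro k
      have hne : c k - z ≠ 0 := sub_ne_zero.mpr (hc k).2
      simpa [mem_sphere_iff_norm] using norm_smul_inv_norm (𝕜 := ℝ) hne
    obtain ⟨w, hwS, φ, hφ, hwt⟩ := (isCompact_sphere (0 : E × F) 1).tendsto_subseq hunit
    have hwt' : Tendsto (fun k => ‖c (φ k) - z‖⁻¹ • (c (φ k) - z)) atTop (nhds w) := hwt
    refine ⟨w, ?_, by simpa [mem_sphere_iff_norm] using hwS, φ, hφ, hwt'⟩
    exact hTC (mem_paperTangentCone_of_seq (c := fun k => c (φ k)) (fun k => hc (φ k))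
      (hcz.comp hφ.tendsto_atTop) hwt')
  -- a Lipschitz bound on ‖c k - z‖ for points of the graph
  have hnormle : ∀ p : E × F, p ∈ Z → ‖p - z‖ ≤ M * ‖p.1 - x‖ := by
    intro p hp
    rw [Prod.norm_def]
    refine max_le ?_ ?_
    · calc ‖(p - z).1‖ = ‖p.1 - x‖ := rfl
        _ ≤ M * ‖p.1 - x‖ := le_mul_of_one_le_left (norm_nonneg _) hM1
    · have h2 : ‖(p - z).2‖ = ‖s p.1 - s x‖ := by
        rw [show (p - z).2 = p.2 - s x from rfl, hp]
      rw [h2]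
      calc ‖s p.1 - s x‖ ≤ (K : ℝ) * ‖p.1 - x‖ := by
            simpa [dist_eq_norm] using hK.dist_le_mul p.1 x
        _ ≤ M * ‖p.1 - x‖ := by
            exact mul_le_mul_of_nonneg_right (le_max_right _ _) (norm_nonneg _)
  have hnormge : ∀ p : E × F, ‖p.1 - x‖ ≤ ‖p - z‖ := by
    intro p
    rw [Prod.norm_def]
    exact le_max_left _ _
  -- surjectivity of the first projection on Dx
  have hsurj : ∀ v : E, ∃ p ∈ Dx, p.1 = v := by
    intro v
    rcases eq_or_ne v 0 with rfl | hv
    · exact ⟨0, Dx.zero_mem, rfl⟩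
    have hv0 : (0:ℝ) < ‖v‖ := norm_pos_iff.mpr hv
    set t : ℕ → ℝ := fun k => ((k : ℝ) + 1)⁻¹ with ht
    have ht0 : ∀ k, 0 < t k := fun k => by positivity
    set c : ℕ → E × F := fun k => (x + t k • v, s (x + t k • v)) with hc
    have hc1 : ∀ k, (c k).1 - x = t k • v := fun k => by simp [hc]
    have hcZ : ∀ k, c k ∈ Z \ {z} := by
      intro k
      refine ⟨rfl, ?_⟩
      simp only [mem_singleton_iff, hc, hz, Prod.mk.injEq, not_and]
      intro h1
      exfalso
      have h2 : t k • v = 0 := by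
        have := sub_eq_zero.mpr h1
        simpa [add_sub_cancel_left] using this
      rcases smul_eq_zero.mp h2 with h | h
      · exact (ht0 k).ne' h
      · exact hv h
    have htlim : Tendsto t atTop (nhds 0) := tendsto_one_div_add_atTop_nhds_zero_nat.congr
        (fun k => by simp [ht, one_div])
    have hxlim : Tendsto (fun k => x + t k • v) atTop (nhds x) := by
      have h2 : Tendsto (fun k => t k • v) atTop (nhds ((0:ℝ) • v)) :=
        htlim.smul tendsto_const_nhds
      simpa using tendsto_const_nhds.add h2
    have hclim : Tendsto c atTop (nhds z) := by
      rw [hz]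
      exact hxlim.prodMk_nhds ((hK.continuous.tendsto x).comp hxlim)
    obtain ⟨w, hwD, hwn, φ, hφ, hwt⟩ := key c hcZ hclim
    -- first components converge to w.1 and lie in span of v
    have h1lim : Tendsto (fun k => (‖c (φ k) - z‖⁻¹ • (c (φ k) - z)).1)
        atTop (nhds w.1) := (continuous_fst.tendsto w).comp hwt
    have hspan : ∀ k, (‖c k - z‖⁻¹ • (c k - z)).1 ∈ Submodule.span ℝ {v} := by
      intro k
      have : (‖c k - z‖⁻¹ • (c k - z)).1 = (‖c k - z‖⁻¹ * t k) • v := by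
        have : (‖c k - z‖⁻¹ • (c k - z)).1 = ‖c k - z‖⁻¹ • ((c k).1 - x) := rfl
        rw [this, hc1, smul_smul]
      rw [this]
      exact Submodule.smul_mem _ _ (Submodule.mem_span_singleton_self v)
    have hw1span : w.1 ∈ Submodule.span ℝ {v} :=
      (Submodule.span ℝ {v}).closed_of_finiteDimensional.mem_of_tendsto h1lim
        (Eventually.of_forall fun k => hspan (φ k))
    -- lower bound on ‖w.1‖
    have hbound : ∀ k, M⁻¹ ≤ ‖(‖c k - z‖⁻¹ • (c k - z)).1‖ := by
      intro k
      have hne : c k - z ≠ 0 := sub_ne_zero.mpr (hcZ k).2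
      have hnorm_pos : 0 < ‖c k - z‖ := norm_pos_iff.mpr hne
      have hfst : ‖(‖c k - z‖⁻¹ • (c k - z)).1‖ = ‖c k - z‖⁻¹ * ‖(c k).1 - x‖ := by
        have h3 : (‖c k - z‖⁻¹ • (c k - z)).1 = ‖c k - z‖⁻¹ • ((c k).1 - x) := rfl
        rw [h3, norm_smul, Real.norm_eq_abs, abs_of_pos (inv_pos.mpr hnorm_pos)]
      rw [hfst]
      have hle := hnormle (c k) (hcZ k).1
      have hp1 : (0:ℝ) < ‖(c k).1 - x‖ := by
        rw [hc1, norm_smul, Real.norm_eq_abs, abs_of_pos (ht0 k)]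
        positivity
      calc M⁻¹ = (M * ‖(c k).1 - x‖)⁻¹ * ‖(c k).1 - x‖ := by
            rw [mul_inv, mul_assoc, inv_mul_cancel₀ hp1.ne', mul_one]
          _ ≤ ‖c k - z‖⁻¹ * ‖(c k).1 - x‖ := by
            gcongr
          _ = ‖c k - z‖⁻¹ * ‖(c k).1 - x‖ := rfl
    have hw1norm : M⁻¹ ≤ ‖w.1‖ := by
      have hn : Tendsto (fun k => ‖(‖c (φ k) - z‖⁻¹ • (c (φ k) - z)).1‖) atTop (nhds ‖w.1‖) :=
        (continuous_norm.tendsto w.1).comp h1lim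
      exact le_of_tendsto_of_tendsto' tendsto_const_nhds hn (fun k => hbound (φ k))
    have hw1ne : w.1 ≠ 0 := by
      intro h
      rw [h, norm_zero] at hw1norm
      exact absurd hw1norm (not_le.mpr (by positivity))
    obtain ⟨a, ha⟩ := Submodule.mem_span_singleton.mp hw1span
    have ha0 : a ≠ 0 := by
      rintro rfl; rw [zero_smul] at ha; exact hw1ne ha.symm
    refine ⟨a⁻¹ • w, Dx.smul_mem _ hwD, ?_⟩
    show a⁻¹ • w.1 = v
    rw [← ha, smul_smul, inv_mul_cancel₀ ha0, one_smul]
  -- build the linear map whose graph is Dx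
  classical
  let fstD : Dx →ₗ[ℝ] E := (LinearMap.fst ℝ E F).comp Dx.subtype
  have hfsurj : Function.Surjective fstD := by
    intro v
    obtain ⟨p, hp, hpv⟩ := hsurj v
    exact ⟨⟨p, hp⟩, hpv⟩
  have hfinj : Function.Injective fstD := by
    have h := LinearMap.injective_iff_surjective_of_finrank_eq_finrank
      (f := fstD) hdim
    exact h.mpr hfsurj
  let e : Dx ≃ₗ[ℝ] E := LinearEquiv.ofBijective fstD ⟨hfinj, hfsurj⟩
  let L0 : E →ₗ[ℝ] F := ((LinearMap.snd ℝ E F).comp Dx.subtype).comp e.symm.toLinearMap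
  let L : E →L[ℝ] F := LinearMap.toContinuousLinearMap L0
  have hLval : ∀ v : E, L v = ((e.symm v : Dx) : E × F).2 := fun v => rfl
  have hgraph : ∀ v : E, (v, L v) ∈ Dx := by
    intro v
    have hp1 : ((e.symm v : Dx) : E × F).1 = v := by
      exact e.apply_symm_apply v
    have heq : (v, L v) = ((e.symm v : Dx) : E × F) := by
      refine Prod.ext hp1.symm ?_
      exact (hLval v).symm
    rw [heq]
    exact (e.symm v).2
  have hchar : ∀ p : E × F, p ∈ Dx ↔ p.2 = L p.1 := by
    intro p
    constructor
    · intro hp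
      have h1 : (p.1, L p.1) ∈ Dx := hgraph p.1
      have h2 : p - (p.1, L p.1) ∈ Dx := Dx.sub_mem hp h1
      have h3 : fstD ⟨_, h2⟩ = fstD 0 := by
        simp [fstD]
      have h4 : (⟨p - (p.1, L p.1), h2⟩ : Dx) = 0 := hfinj h3
      have h5 : p - (p.1, L p.1) = 0 := by
        simpa using congrArg Subtype.val h4
      have h6 : p.2 - L p.1 = 0 := congrArg Prod.snd h5
      exact sub_eq_zero.mp h6
    · intro hp
      have h1 := hgraph p.1
      rwa [← hp, Prod.mk.eta] at h1
  refine ⟨L, hchar, ?_⟩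
  -- differentiability by contradiction
  rw [hasFDerivAt_iff_tendsto]
  by_contra hnot
  rw [Metric.tendsto_nhds_nhds] at hnot
  push_neg at hnot
  obtain ⟨ε, hε, hδ⟩ := hnot
  choose y hy1 hy2 using fun k : ℕ => hδ (δ := ((k:ℝ)+1)⁻¹) (by positivity)
  have hyq : ∀ k, ε ≤ ‖y k - x‖⁻¹ * ‖s (y k) - s x - L (y k - x)‖ := by
    intro k
    have h := hy2 k
    rwa [Real.dist_eq, sub_zero, abs_of_nonneg (by positivity)] at h
  have hyne : ∀ k, y k ≠ x := by
    intro k h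
    have h2 := hyq k
    rw [h] at h2
    simp at h2
    exact absurd h2 (not_le.mpr hε)
  have hylim : Tendsto y atTop (nhds x) := by
    rw [tendsto_iff_dist_tendsto_zero]
    refine squeeze_zero (fun k => dist_nonneg) (fun k => (hy1 k).le) ?_
    exact tendsto_one_div_add_atTop_nhds_zero_nat.congr (fun k => by simp [one_div])
  set c : ℕ → E × F := fun k => (y k, s (y k)) with hcdef
  have hcZ : ∀ k, c k ∈ Z \ {z} := by
    intro k
    refine ⟨rfl, ?_⟩
    simp only [mem_singleton_iff, hcdef, hz, Prod.mk.injEq, not_and]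
    intro h1
    exact absurd h1 (hyne k)
  have hclim : Tendsto c atTop (nhds z) := by
    rw [hz]
    exact hylim.prodMk_nhds ((hK.continuous.tendsto x).comp hylim)
  obtain ⟨w, hwD, hwn, φ, hφ, hwt⟩ := key c hcZ hclim
  have hw2 : w.2 = L w.1 := (hchar w).mp hwD
  have hlow : ∀ k, ε / M ≤
      ‖(‖c k - z‖⁻¹ • (c k - z)).2 - L ((‖c k - z‖⁻¹ • (c k - z)).1)‖ := by
    intro k
    have hne : c k - z ≠ 0 := sub_ne_zero.mpr (hcZ k).2
    have hnorm_pos : 0 < ‖c k - z‖ := norm_pos_iff.mpr hne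
    have hy0 : (0:ℝ) < ‖y k - x‖ := by
      rw [norm_pos_iff, sub_ne_zero]; exact hyne k
    have heval : (‖c k - z‖⁻¹ • (c k - z)).2 - L ((‖c k - z‖⁻¹ • (c k - z)).1)
        = ‖c k - z‖⁻¹ • (s (y k) - s x - L (y k - x)) := by
      have h1 : (‖c k - z‖⁻¹ • (c k - z)).2 = ‖c k - z‖⁻¹ • (s (y k) - s x) := rfl
      have h2 : (‖c k - z‖⁻¹ • (c k - z)).1 = ‖c k - z‖⁻¹ • (y k - x) := rfl
      rw [h1, h2, map_smul, ← smul_sub]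
    rw [heval, norm_smul, Real.norm_eq_abs, abs_of_pos (inv_pos.mpr hnorm_pos)]
    have hN : ε * ‖y k - x‖ ≤ ‖s (y k) - s x - L (y k - x)‖ := by
      calc ε * ‖y k - x‖ ≤ (‖y k - x‖⁻¹ * ‖s (y k) - s x - L (y k - x)‖) * ‖y k - x‖ :=
            mul_le_mul_of_nonneg_right (hyq k) hy0.le
        _ = ‖s (y k) - s x - L (y k - x)‖ := by
            field_simp
    have hle : ‖c k - z‖ ≤ M * ‖y k - x‖ := hnormle (c k) (hcZ k).1
    calc ε / M = (M * ‖y k - x‖)⁻¹ * (ε * ‖y k - x‖) := by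
          rw [mul_inv]; field_simp
      _ ≤ ‖c k - z‖⁻¹ * ‖s (y k) - s x - L (y k - x)‖ := by
          gcongr
  have hcont : Tendsto (fun k => ‖(‖c (φ k) - z‖⁻¹ • (c (φ k) - z)).2
      - L ((‖c (φ k) - z‖⁻¹ • (c (φ k) - z)).1)‖) atTop (nhds ‖w.2 - L w.1‖) := by
    have hcm : Continuous fun p : E × F => ‖p.2 - L p.1‖ :=
      (continuous_snd.sub (L.continuous.comp continuous_fst)).norm
    exact (hcm.tendsto w).comp hwt
  rw [hw2, sub_self, norm_zero] at hcont
  have hfin : ε / M ≤ 0 :=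
    le_of_tendsto_of_tendsto' tendsto_const_nhds hcont (fun k => hlow (φ k))
  exact absurd hfin (not_le.mpr (by positivity))

/-- Let `s : ℝⁿ → ℝ^d` be Lipschitz, `Z` its graph. If for every `x` the tangent cone
`TC_{(x, s x)} Z` is contained in an `n`-dimensional subspace `D x`, then `s` is
differentiable at every `x`, `D x` is the graph of the derivative of `s` at `x`, and if
moreover `x ↦ D x` is continuous (equivalently, the map `x ↦ L x` sending `x` to the
linear map whose graph is `D x` is continuous), then `s` is of class `C¹`. -/
theorem lipschitz_graph_differentiable_of_tangentCone
    {n d : ℕ} (s : EuclideanSpace ℝ (Fin n) → EuclideanSpace ℝ (Fin d))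
    (hs : ∃ K : NNReal, LipschitzWith K s)
    (D : EuclideanSpace ℝ (Fin n) →
      Submodule ℝ (EuclideanSpace ℝ (Fin n) × EuclideanSpace ℝ (Fin d)))
    (hdim : ∀ x, Module.finrank ℝ (D x) = n)
    (hTC : ∀ x, paperTangentCone
      {p : EuclideanSpace ℝ (Fin n) × EuclideanSpace ℝ (Fin d) | p.2 = s p.1}
      (x, s x) ⊆ D x) :
    (∀ x, DifferentiableAt ℝ s x) ∧
    (∀ x, (D x : Set (EuclideanSpace ℝ (Fin n) × EuclideanSpace ℝ (Fin d))) =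
      {p | p.2 = fderiv ℝ s x p.1}) ∧
    ((Continuous fun x => fderiv ℝ s x) → ContDiff ℝ 1 s) := by
  obtain ⟨K, hK⟩ := hs
  have hdim' : ∀ x, Module.finrank ℝ (D x)
      = Module.finrank ℝ (EuclideanSpace ℝ (Fin n)) := by
    intro x; rw [finrank_euclideanSpace_fin]; exact hdim x
  choose L hLgraph hLderiv using fun x => aux_graph hK (D x) (hdim' x) x (hTC x)
  have hdiff : ∀ x, DifferentiableAt ℝ s x := fun x => (hLderiv x).differentiableAt
  have hfd : ∀ x, fderiv ℝ s x = L x := fun x => (hLderiv x).fderiv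
  refine ⟨hdiff, ?_, ?_⟩
  · intro x
    ext p
    simp only [SetLike.mem_coe, mem_setOf_eq, hfd x]
    exact hLgraph x p
  · intro hcont
    rw [contDiff_one_iff_fderiv]
    exact ⟨hdiff, hcont⟩
end

section
/- Let s : ℝ^n → ℝ^d be continuous, Z = {(y, s(y)) : y ∈ ℝ^n} its graph, x ∈ ℝ^n and z = (x, s(x)). Suppose the tangent cone TC_z Z is contained in an n-dimensional linear subspace D of ℝ^n × ℝ^d satisfying D ∩ ({0} × ℝ^d) = {0}. Then D is the graph of a (unique) linear map L : ℝ^n → ℝ^d, and s is differentiable at x with derivative L. -/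
open Filter Set

/-- Let `s : ℝⁿ → ℝ^d` be continuous, `Z` its graph, `x ∈ ℝⁿ` and `z = (x, s x)`. If the
tangent cone `TC_z Z` is contained in an `n`-dimensional subspace `D` with
`D ∩ ({0} × ℝ^d) = {0}`, then `D` is the graph of a unique linear map `L : ℝⁿ → ℝ^d`
and `s` is differentiable at `x` with derivative `L`. -/
theorem differentiable_of_tangentCone_in_graph_subspace
    {n d : ℕ} (s : EuclideanSpace ℝ (Fin n) → EuclideanSpace ℝ (Fin d))
    (hs : Continuous s) (x : EuclideanSpace ℝ (Fin n))
    (D : Submodule ℝ (EuclideanSpace ℝ (Fin n) × EuclideanSpace ℝ (Fin d)))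
    (hdim : Module.finrank ℝ D = n)
    (htrans : D ⊓ Submodule.prod ⊥ ⊤ = ⊥)
    (hTC : paperTangentCone {p : EuclideanSpace ℝ (Fin n) × EuclideanSpace ℝ (Fin d) |
      p.2 = s p.1} (x, s x) ⊆ D) :
    ∃ L : EuclideanSpace ℝ (Fin n) →L[ℝ] EuclideanSpace ℝ (Fin d),
      (D : Set (EuclideanSpace ℝ (Fin n) × EuclideanSpace ℝ (Fin d))) = {p | p.2 = L p.1} ∧
      HasFDerivAt s L x ∧
      ∀ L' : EuclideanSpace ℝ (Fin n) →L[ℝ] EuclideanSpace ℝ (Fin d),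
        (D : Set (EuclideanSpace ℝ (Fin n) × EuclideanSpace ℝ (Fin d))) = {p | p.2 = L' p.1} →
        L' = L := by
  classical
  -- The projection D → ℝⁿ
  let f : D →ₗ[ℝ] EuclideanSpace ℝ (Fin n) :=
    (LinearMap.fst ℝ (EuclideanSpace ℝ (Fin n)) (EuclideanSpace ℝ (Fin d))).comp D.subtype
  have hinj : Function.Injective f := by
    intro a b hab
    have hsub : ((a : EuclideanSpace ℝ (Fin n) × EuclideanSpace ℝ (Fin d)) -
        (b : EuclideanSpace ℝ (Fin n) × EuclideanSpace ℝ (Fin d))) ∈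
        D ⊓ Submodule.prod ⊥ ⊤ := by
      refine ⟨D.sub_mem a.2 b.2, ?_, trivial⟩
      show ((a : EuclideanSpace ℝ (Fin n) × EuclideanSpace ℝ (Fin d)) -
        (b : EuclideanSpace ℝ (Fin n) × EuclideanSpace ℝ (Fin d))).1 ∈
        (⊥ : Submodule ℝ (EuclideanSpace ℝ (Fin n)))
      have h : (a : EuclideanSpace ℝ (Fin n) × EuclideanSpace ℝ (Fin d)).1 =
        (b : EuclideanSpace ℝ (Fin n) × EuclideanSpace ℝ (Fin d)).1 := hab
      simp [Prod.fst_sub, sub_eq_zero, h]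
    rw [htrans, Submodule.mem_bot, sub_eq_zero] at hsub
    exact Subtype.ext hsub
  have hrank : Module.finrank ℝ D = Module.finrank ℝ (EuclideanSpace ℝ (Fin n)) := by
    rw [hdim]; exact (finrank_euclideanSpace_fin (𝕜 := ℝ) (n := n)).symm
  have hbij : Function.Bijective f :=
    ⟨hinj, (LinearMap.injective_iff_surjective_of_finrank_eq_finrank hrank).mp hinj⟩
  let e : D ≃ₗ[ℝ] EuclideanSpace ℝ (Fin n) := LinearEquiv.ofBijective f hbij
  let L₀ : EuclideanSpace ℝ (Fin n) →ₗ[ℝ] EuclideanSpace ℝ (Fin d) :=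
    ((LinearMap.snd ℝ _ _).comp D.subtype).comp (e.symm : _ →ₗ[ℝ] D)
  let L : EuclideanSpace ℝ (Fin n) →L[ℝ] EuclideanSpace ℝ (Fin d) :=
    LinearMap.toContinuousLinearMap L₀
  have hLapp : ∀ v, L v =
      ((e.symm v : D) : EuclideanSpace ℝ (Fin n) × EuclideanSpace ℝ (Fin d)).2 :=
    fun v => rfl
  have hfst : ∀ v,
      ((e.symm v : D) : EuclideanSpace ℝ (Fin n) × EuclideanSpace ℝ (Fin d)).1 = v :=
    fun v => e.apply_symm_apply v
  have hD : (D : Set (EuclideanSpace ℝ (Fin n) × EuclideanSpace ℝ (Fin d))) =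
      {p | p.2 = L p.1} := by
    ext p
    simp only [SetLike.mem_coe, mem_setOf_eq]
    constructor
    · intro hp
      have hq : e.symm p.1 = ⟨p, hp⟩ := e.symm_apply_eq.mpr rfl
      rw [hLapp, hq]
    · intro hp
      have hval : ((e.symm p.1 : D) : EuclideanSpace ℝ (Fin n) × EuclideanSpace ℝ (Fin d)) = p := by
        refine Prod.ext (hfst p.1) ?_
        rw [← hLapp]; exact hp.symm
      exact hval ▸ (e.symm p.1).2
  refine ⟨L, hD, ?_, ?_⟩
  · -- differentiability
    rw [hasFDerivAt_iff_tendsto]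
    by_contra hT
    rw [Metric.tendsto_nhds] at hT
    push_neg at hT
    obtain ⟨ε, hε0, hfr⟩ := hT
    have hsel : ∀ k : ℕ, ∃ y, dist y x < 1 / (k + 1) ∧
        ε ≤ ‖y - x‖⁻¹ * ‖s y - s x - L (y - x)‖ := by
      intro k
      obtain ⟨y, hyU, hy⟩ := Filter.frequently_iff.mp hfr
        (Metric.ball_mem_nhds x (by positivity : (0:ℝ) < 1 / (k + 1)))
      refine ⟨y, by simpa [Metric.mem_ball] using hyU, ?_⟩
      have h1 := hy
      have h2 : (0:ℝ) ≤ ‖y - x‖⁻¹ * ‖s y - s x - L (y - x)‖ :=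
        mul_nonneg (inv_nonneg.mpr (norm_nonneg _)) (norm_nonneg _)
      calc ε ≤ dist (‖y - x‖⁻¹ * ‖s y - s x - L (y - x)‖) 0 := h1
        _ = ‖y - x‖⁻¹ * ‖s y - s x - L (y - x)‖ := by
            rw [Real.dist_eq, sub_zero, abs_of_nonneg h2]
    choose y hy1 hy2 using hsel
    have hyx : ∀ k, y k ≠ x := by
      intro k h
      have h' := hy2 k
      rw [h] at h'
      simp only [sub_self, norm_zero, inv_zero, zero_mul] at h'
      linarith
    have hytx : Tendsto y atTop (nhds x) := by
      rw [tendsto_iff_dist_tendsto_zero]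
      refine squeeze_zero (fun k => dist_nonneg) (fun k => le_of_lt (hy1 k)) ?_
      exact tendsto_one_div_add_atTop_nhds_zero_nat
    set z : EuclideanSpace ℝ (Fin n) × EuclideanSpace ℝ (Fin d) := (x, s x) with hz
    set c : ℕ → EuclideanSpace ℝ (Fin n) × EuclideanSpace ℝ (Fin d) :=
      fun k => (y k, s (y k)) with hcdef
    have hc : Tendsto c atTop (nhds z) :=
      hytx.prodMk_nhds ((hs.tendsto x).comp hytx)
    have hcz : ∀ k, c k ≠ z := fun k h => hyx k (congrArg Prod.fst h)
    have hnorm : ∀ k, 0 < ‖c k - z‖ := fun k => norm_sub_pos_iff.mpr (hcz k)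
    set u : ℕ → EuclideanSpace ℝ (Fin n) × EuclideanSpace ℝ (Fin d) :=
      fun k => ‖c k - z‖⁻¹ • (c k - z) with hudef
    have husph : ∀ k, u k ∈ Metric.sphere
        (0 : EuclideanSpace ℝ (Fin n) × EuclideanSpace ℝ (Fin d)) 1 := by
      intro k
      rw [mem_sphere_zero_iff_norm, hudef]
      simp [norm_smul, abs_of_nonneg (inv_nonneg.mpr (norm_nonneg _)),
        inv_mul_cancel₀ (hnorm k).ne']
    obtain ⟨w, hwsph, φ, hφ, huw⟩ :=
      (isCompact_sphere (0 : EuclideanSpace ℝ (Fin n) × EuclideanSpace ℝ (Fin d))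
        1).tendsto_subseq husph
    have hwD : w ∈ D := by
      apply hTC
      refine Or.inr ⟨1, w, fun k => c (φ k), fun k => ⟨rfl, ?_⟩, ?_, ?_, (one_smul ℝ w).symm⟩
      · simpa using hcz (φ k)
      · exact hc.comp hφ.tendsto_atTop
      · exact huw
    have hw2 : w.2 = L w.1 := by
      have hmem : w ∈ {p : EuclideanSpace ℝ (Fin n) × EuclideanSpace ℝ (Fin d) |
        p.2 = L p.1} := hD ▸ hwD
      exact hmem
    have key : ∀ k, ε * ‖(u k).1‖ ≤ ‖(u k).2 - L (u k).1‖ := by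
      intro k
      have hy0 : 0 < ‖y k - x‖ := norm_sub_pos_iff.mpr (hyx k)
      have h1 : ε * ‖y k - x‖ ≤ ‖s (y k) - s x - L (y k - x)‖ := by
        have h := hy2 k
        rw [inv_mul_eq_div, le_div_iff₀ hy0] at h
        exact h
      have hr : (0:ℝ) ≤ ‖c k - z‖⁻¹ := inv_nonneg.mpr (norm_nonneg _)
      have hu1 : (u k).1 = ‖c k - z‖⁻¹ • (y k - x) := rfl
      have hu2 : (u k).2 = ‖c k - z‖⁻¹ • (s (y k) - s x) := rfl
      calc ε * ‖(u k).1‖ = ‖c k - z‖⁻¹ * (ε * ‖y k - x‖) := by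
            rw [hu1, norm_smul, Real.norm_eq_abs, abs_of_nonneg hr]; ring
        _ ≤ ‖c k - z‖⁻¹ * ‖s (y k) - s x - L (y k - x)‖ :=
            mul_le_mul_of_nonneg_left h1 hr
        _ = ‖(u k).2 - L (u k).1‖ := by
            rw [hu2, hu1, map_smul, ← smul_sub, norm_smul, Real.norm_eq_abs,
              abs_of_nonneg hr]
    have hA : Tendsto (fun k => ε * ‖(u (φ k)).1‖) atTop (nhds (ε * ‖w.1‖)) :=
      (((continuous_fst.norm).tendsto w).comp huw).const_mul ε
    have hB : Tendsto (fun k => ‖(u (φ k)).2 - L (u (φ k)).1‖) atTop (nhds 0) := by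
      have hcont : Continuous fun p : EuclideanSpace ℝ (Fin n) × EuclideanSpace ℝ (Fin d)
          => ‖p.2 - L p.1‖ :=
        (continuous_snd.sub (L.continuous.comp continuous_fst)).norm
      have h := (hcont.tendsto w).comp huw
      simpa [← hw2, Function.comp_def] using h
    have hle : ε * ‖w.1‖ ≤ 0 :=
      le_of_tendsto_of_tendsto' hA hB fun k => key (φ k)
    have hw1 : w.1 = 0 := by
      have hnn : ‖w.1‖ ≤ 0 := by nlinarith [norm_nonneg w.1]
      exact norm_le_zero_iff.mp hnn
    have hwbot : w ∈ D ⊓ Submodule.prod ⊥ ⊤ :=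
      ⟨hwD, Submodule.mem_prod.mpr ⟨by simp [hw1], trivial⟩⟩
    rw [htrans, Submodule.mem_bot] at hwbot
    have h10 : (1:ℝ) = 0 := by
      have h := mem_sphere_zero_iff_norm.mp hwsph
      rw [hwbot] at h; simpa using h.symm
    norm_num at h10
  · intro L' hD'
    refine ContinuousLinearMap.ext fun v => ?_
    have h1 : ((v, L v) : EuclideanSpace ℝ (Fin n) × EuclideanSpace ℝ (Fin d)) ∈
        (D : Set (EuclideanSpace ℝ (Fin n) × EuclideanSpace ℝ (Fin d))) := by
      rw [hD]; exact rfl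
    rw [hD'] at h1
    exact h1.symm
end

section
/- Let f be a C^1 embedding of B into E satisfying conditions (1') and (2'). Then there exists ε > 0 such that every C^1 embedding g of B into E whose C^1-distance to f is less than ε also satisfies conditions (1') and (2'). In other words, conditions (1') and (2') are open in the C^1 topology. -/
open Set

/-- The stable cone `Cˢ = {(vₛ, vᵤ) : ‖vₛ‖ ≤ ‖vᵤ‖}` in `E = ℝˢ × ℝᵘ`. -/
def coneS (s u : ℕ) : Set (EuclideanSpace ℝ (Fin s) × EuclideanSpace ℝ (Fin u)) :=
  {v | ‖v.1‖ ≤ ‖v.2‖}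

/-- The unstable cone `Cᵘ = {(vₛ, vᵤ) : ‖vᵤ‖ ≤ ‖vₛ‖}` in `E = ℝˢ × ℝᵘ`. -/
def coneU (s u : ℕ) : Set (EuclideanSpace ℝ (Fin s) × EuclideanSpace ℝ (Fin u)) :=
  {v | ‖v.2‖ ≤ ‖v.1‖}

/-- A `C¹` embedding of `B` into `E`: a `C¹` map defined on a neighbourhood of `B`,
injective on `B`, with invertible derivative at every point of `B`. -/
def IsC1EmbeddingOn {s u : ℕ}
    (B : Set (EuclideanSpace ℝ (Fin s) × EuclideanSpace ℝ (Fin u)))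
    (g : EuclideanSpace ℝ (Fin s) × EuclideanSpace ℝ (Fin u) →
      EuclideanSpace ℝ (Fin s) × EuclideanSpace ℝ (Fin u)) : Prop :=
  (∃ U, IsOpen U ∧ B ⊆ U ∧ ContDiffOn ℝ 1 g U) ∧
  Set.InjOn g B ∧ ∀ z ∈ B, Function.Bijective (fderiv ℝ g z)

/-- Conditions (1') and (2') of topological normal hyperbolicity, for `B = Bˢ × Bᵘ`,
`∂ˢB = (frontier Bˢ) × Bᵘ`, `∂ᵘB = Bˢ × (frontier Bᵘ)`:
(1') `g(B) ∩ ∂ˢB = ∅` and `B ∩ g(∂ᵘB) = ∅`;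
(2') for every `z ∈ B`, `Dg_z(Cˢ) ⊆ int Cˢ ∪ {0}` and `Cᵘ ⊆ Dg_z(int Cᵘ) ∪ {0}`. -/
def SatisfiesConds {s u : ℕ}
    (Bs : Set (EuclideanSpace ℝ (Fin s))) (Bu : Set (EuclideanSpace ℝ (Fin u)))
    (g : EuclideanSpace ℝ (Fin s) × EuclideanSpace ℝ (Fin u) →
      EuclideanSpace ℝ (Fin s) × EuclideanSpace ℝ (Fin u)) : Prop :=
  g '' (Bs ×ˢ Bu) ∩ (frontier Bs ×ˢ Bu) = ∅ ∧
  (Bs ×ˢ Bu) ∩ g '' (Bs ×ˢ frontier Bu) = ∅ ∧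
  ∀ z ∈ Bs ×ˢ Bu,
    (fderiv ℝ g z) '' coneS s u ⊆ interior (coneS s u) ∪ {0} ∧
    coneU s u ⊆ (fderiv ℝ g z) '' interior (coneU s u) ∪ {0}

lemma lt_subset_int_coneS (s u : ℕ) :
    {v : EuclideanSpace ℝ (Fin s) × EuclideanSpace ℝ (Fin u) | ‖v.1‖ < ‖v.2‖} ⊆
      interior (coneS s u) := by
  have h1 : Continuous fun v : EuclideanSpace ℝ (Fin s) × EuclideanSpace ℝ (Fin u) => ‖v.1‖ :=
    continuous_fst.norm
  have h2 : Continuous fun v : EuclideanSpace ℝ (Fin s) × EuclideanSpace ℝ (Fin u) => ‖v.2‖ :=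
    continuous_snd.norm
  exact interior_maximal (fun v hv => le_of_lt (a := ‖v.1‖) hv) (isOpen_lt h1 h2)

lemma lt_subset_int_coneU (s u : ℕ) :
    {v : EuclideanSpace ℝ (Fin s) × EuclideanSpace ℝ (Fin u) | ‖v.2‖ < ‖v.1‖} ⊆
      interior (coneU s u) := by
  have h1 : Continuous fun v : EuclideanSpace ℝ (Fin s) × EuclideanSpace ℝ (Fin u) => ‖v.1‖ :=
    continuous_fst.norm
  have h2 : Continuous fun v : EuclideanSpace ℝ (Fin s) × EuclideanSpace ℝ (Fin u) => ‖v.2‖ :=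
    continuous_snd.norm
  exact interior_maximal (fun v hv => le_of_lt (a := ‖v.2‖) hv) (isOpen_lt h2 h1)

lemma int_coneS_subset {s u : ℕ} (hs : 0 < s) :
    interior (coneS s u) ⊆
      {v : EuclideanSpace ℝ (Fin s) × EuclideanSpace ℝ (Fin u) | ‖v.1‖ < ‖v.2‖} := by
  intro v hv
  by_contra h
  simp only [mem_setOf_eq, not_lt] at h
  have hv' : v ∈ coneS s u := interior_subset hv
  have heq : ‖v.1‖ = ‖v.2‖ := le_antisymm hv' h
  obtain ⟨δ, hδ, hball⟩ := Metric.mem_nhds_iff.mp (mem_interior_iff_mem_nhds.mp hv)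
  have hball' : Metric.ball v δ ⊆ coneS s u := hball
  rcases eq_or_ne v.1 0 with h1 | h1
  · have h2 : v.2 = 0 := by
      have : ‖v.2‖ = 0 := by rw [← heq, h1, norm_zero]
      simpa using this
    haveI : Nonempty (Fin s) := ⟨⟨0, hs⟩⟩
    obtain ⟨e, he⟩ := exists_norm_eq (EuclideanSpace ℝ (Fin s)) (le_of_lt (half_pos hδ))
    have hmem : ((e, v.2) : _) ∈ Metric.ball v δ := by
      rw [Metric.mem_ball, Prod.dist_eq]
      simp only [dist_self, dist_eq_norm]
      rw [h1, sub_zero, he]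
      simpa using half_lt_self hδ
    have := hball' hmem
    simp only [coneS, mem_setOf_eq, h2, norm_zero, he] at this
    linarith [half_pos hδ]
  · have hn : (0:ℝ) < ‖v.1‖ := norm_pos_iff.mpr h1
    set c : ℝ := 1 + δ / (2 * ‖v.1‖) with hc
    have hc1 : 1 < c := by
      have : 0 < δ / (2 * ‖v.1‖) := div_pos hδ (by linarith)
      simp [hc]; linarith
    have hmem : ((c • v.1, v.2) : _) ∈ Metric.ball v δ := by
      rw [Metric.mem_ball, Prod.dist_eq]
      simp only [dist_self, dist_eq_norm]
      have : c • v.1 - v.1 = (c - 1) • v.1 := by rw [sub_smul, one_smul]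
      rw [this, norm_smul]
      have hcc : ‖c - 1‖ = δ / (2 * ‖v.1‖) := by
        rw [Real.norm_eq_abs, abs_of_pos (by linarith)]; simp [hc]
      rw [hcc]
      have h3 : δ / (2 * ‖v.1‖) * ‖v.1‖ = δ / 2 := by
        field_simp
      rw [h3]
      simpa using half_lt_self hδ
    have := hball' hmem
    simp only [coneS, mem_setOf_eq, norm_smul] at this
    have : |c| * ‖v.1‖ ≤ ‖v.2‖ := this
    rw [abs_of_pos (by linarith), ← heq] at this
    nlinarith
/-- Local abbreviation for the ambient space. -/
abbrev Esp (s u : ℕ) := EuclideanSpace ℝ (Fin s) × EuclideanSpace ℝ (Fin u)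

open Metric

/-- Conditions (1') and (2') are open in the `C¹` topology: if a `C¹` embedding `f` of
`B = Bˢ × Bᵘ` satisfies them, then there is `ε > 0` such that every `C¹` embedding `g`
at `C¹`-distance less than `ε` from `f` on `B` also satisfies them. -/
theorem conditions_open_in_C1 {s u : ℕ}
    (Bs : Set (EuclideanSpace ℝ (Fin s))) (Bu : Set (EuclideanSpace ℝ (Fin u)))
    (hBsc : IsCompact Bs) (hBsconv : Convex ℝ Bs) (hBs0 : Bs ∈ nhds 0)
    (hBuc : IsCompact Bu) (hBuconv : Convex ℝ Bu) (hBu0 : Bu ∈ nhds 0)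
    (f : EuclideanSpace ℝ (Fin s) × EuclideanSpace ℝ (Fin u) →
      EuclideanSpace ℝ (Fin s) × EuclideanSpace ℝ (Fin u))
    (hf : IsC1EmbeddingOn (Bs ×ˢ Bu) f) (hfc : SatisfiesConds Bs Bu f) :
    ∃ ε > (0 : ℝ),
      ∀ g, IsC1EmbeddingOn (Bs ×ˢ Bu) g →
        (∀ z ∈ Bs ×ˢ Bu, ‖f z - g z‖ + ‖fderiv ℝ f z - fderiv ℝ g z‖ < ε) →
        SatisfiesConds Bs Bu g := by
  classical
  obtain ⟨⟨U, hUo, hBU, hfC1⟩, hfinj, hfD⟩ := hf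
  obtain ⟨h1a, h1b, h2⟩ := hfc
  set B : Set (Esp s u) := Bs ×ˢ Bu with hB
  have hBc : IsCompact B := hBsc.prod hBuc
  have hfcont : ContinuousOn f B := hfC1.continuousOn.mono hBU
  -- part 1a : separation between f(B) and ∂ˢB
  have hK2c : IsCompact ((frontier Bs) ×ˢ Bu) :=
    (hBsc.of_isClosed_subset isClosed_frontier hBsc.isClosed.frontier_subset).prod hBuc
  obtain ⟨δ1, hδ1, hdisj1⟩ :=
    (Set.disjoint_iff_inter_eq_empty.mpr h1a).exists_thickenings
      (hBc.image_of_continuousOn hfcont) hK2c.isClosed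
  -- part 1b : separation between B and f(∂ᵘB)
  have hdu : (Bs ×ˢ frontier Bu : Set (Esp s u)) ⊆ B :=
    Set.prod_mono (subset_refl _) hBuc.isClosed.frontier_subset
  have hduc : IsCompact (Bs ×ˢ frontier Bu : Set (Esp s u)) :=
    hBsc.prod (hBuc.of_isClosed_subset isClosed_frontier hBuc.isClosed.frontier_subset)
  obtain ⟨δ2, hδ2, hdisj2⟩ :=
    (Set.disjoint_iff_inter_eq_empty.mpr h1b).exists_thickenings
      hBc (hduc.image_of_continuousOn (hfcont.mono hdu)).isClosed
  -- part 2 : the cone constant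
  have hAcont : ContinuousOn (fderiv ℝ f) U := hfC1.continuousOn_fderiv_of_isOpen hUo le_rfl
  set Ssph : Set (Esp s u) := coneS s u ∩ Metric.sphere 0 1 with hSsph
  have hconeScl : IsClosed (coneS s u) := by
    have h1 : Continuous fun v : Esp s u => ‖v.1‖ := continuous_fst.norm
    have h2 : Continuous fun v : Esp s u => ‖v.2‖ := continuous_snd.norm
    exact isClosed_le h1 h2
  have hSsphc : IsCompact Ssph := (isCompact_sphere 0 1).inter_left hconeScl
  set φ : Esp s u × Esp s u → ℝ := fun p => ‖(fderiv ℝ f p.1 p.2).2‖ - ‖(fderiv ℝ f p.1 p.2).1‖ with hφ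
  have hφcont : ContinuousOn φ (B ×ˢ Ssph) := by
    have h0 : ContinuousOn (fun p : Esp s u × Esp s u => fderiv ℝ f p.1 p.2) (U ×ˢ (univ : Set (Esp s u))) := by
      apply ContinuousOn.clm_apply
      · exact hAcont.comp continuousOn_fst (fun p hp => (Set.mem_prod.mp hp).1)
      · exact continuousOn_snd
    have h0' : ContinuousOn (fun p : Esp s u × Esp s u => fderiv ℝ f p.1 p.2) (B ×ˢ Ssph) :=
      h0.mono (Set.prod_mono hBU (Set.subset_univ _))
    exact ((continuous_snd.norm).comp_continuousOn h0').sub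
      ((continuous_fst.norm).comp_continuousOn h0')
  have hpos : 0 < s → ∀ z ∈ B, ∀ v ∈ Ssph, 0 < φ (z, v) := by
    intro hs z hz v hv
    obtain ⟨hv1, hv2⟩ := hv
    have hvn : ‖v‖ = 1 := mem_sphere_zero_iff_norm.mp hv2
    have hvne : v ≠ 0 := by
      intro h; rw [h, norm_zero] at hvn; exact one_ne_zero hvn.symm
    have hmem := (h2 z hz).1 ⟨v, hv1, rfl⟩
    rcases hmem with hmem | hmem
    · exact sub_pos.mpr (int_coneS_subset hs hmem)
    · exfalso
      apply hvne
      apply (hfD z hz).injective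
      rw [map_zero]
      exact hmem
  have hc : ∃ c : ℝ, 0 < c ∧ (0 < s → ∀ z ∈ B, ∀ v ∈ Ssph, c ≤ φ (z, v)) := by
    rcases Nat.eq_zero_or_pos s with hs | hs
    · exact ⟨1, one_pos, fun h => absurd hs (by omega)⟩
    rcases (B ×ˢ Ssph).eq_empty_or_nonempty with hemp | hne
    · refine ⟨1, one_pos, fun _ z hz v hv => absurd ?_ (Set.eq_empty_iff_forall_notMem.mp hemp ⟨z, v⟩)⟩
      exact Set.mem_prod.mpr ⟨hz, hv⟩
    obtain ⟨p₀, hp₀, hmin⟩ := (hBc.prod hSsphc).exists_isMinOn hne hφcont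
    have hp0 : φ p₀ = φ (p₀.1, p₀.2) := rfl
    refine ⟨φ p₀, by rw [hp0]; exact hpos hs p₀.1 (Set.mem_prod.mp hp₀).1 p₀.2 (Set.mem_prod.mp hp₀).2, ?_⟩
    intro _ z hz v hv
    exact hmin (Set.mem_prod.mpr ⟨hz, hv⟩)
  obtain ⟨c, hcpos, hcmin⟩ := hc
  refine ⟨min (min δ1 δ2) (c / 3), by positivity, ?_⟩
  intro g hg hgd
  obtain ⟨⟨V, hVo, hBV, hgC1⟩, hginj, hgD⟩ := hg
  have hgdist : ∀ z ∈ B, ‖f z - g z‖ < min δ1 δ2 ∧ ‖fderiv ℝ f z - fderiv ℝ g z‖ < c / 3 := by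
    intro z hz
    have h := hgd z hz
    have hn1 : (0:ℝ) ≤ ‖f z - g z‖ := norm_nonneg _
    have hn2 : (0:ℝ) ≤ ‖fderiv ℝ f z - fderiv ℝ g z‖ := norm_nonneg _
    have e1 : min (min δ1 δ2) (c / 3) ≤ min δ1 δ2 := min_le_left _ _
    have e2 : min (min δ1 δ2) (c / 3) ≤ c / 3 := min_le_right _ _
    exact ⟨by linarith, by linarith⟩
  -- condition (i) for g, as a standalone statement
  have hcondS : ∀ z ∈ B, (fderiv ℝ g z) '' coneS s u ⊆ interior (coneS s u) ∪ {0} := by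
    intro z hz
    rcases Nat.eq_zero_or_pos s with hs | hs
    · subst hs
      have hcuniv : coneS 0 u = univ := by
        apply Set.eq_univ_of_forall
        intro v
        show ‖v.1‖ ≤ ‖v.2‖
        rw [Subsingleton.elim v.1 0, norm_zero]
        exact norm_nonneg _
      rw [hcuniv, interior_univ]
      intro w _
      exact Or.inl trivial
    rintro w ⟨v, hv, rfl⟩
    rcases eq_or_ne v 0 with rfl | hvne
    · right
      simp only [map_zero]
      rfl
    left
    have hvn : (0:ℝ) < ‖v‖ := norm_pos_iff.mpr hvne
    set v' : Esp s u := ‖v‖⁻¹ • v with hv'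
    have hv'sph : v' ∈ Ssph := by
      constructor
      · show ‖v'.1‖ ≤ ‖v'.2‖
        have e1 : v'.1 = ‖v‖⁻¹ • v.1 := rfl
        have e2 : v'.2 = ‖v‖⁻¹ • v.2 := rfl
        rw [e1, e2, norm_smul, norm_smul]
        exact mul_le_mul_of_nonneg_left hv (norm_nonneg _)
      · rw [mem_sphere_zero_iff_norm]
        exact norm_smul_inv_norm hvne
    have hkey : c ≤ φ (z, v') := hcmin hs z hz v' hv'sph
    set A := fderiv ℝ f z with hA
    set D := fderiv ℝ g z with hD
    have hAD : ‖A - D‖ < c / 3 := (hgdist z hz).2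
    have hADv : ‖A v' - D v'‖ ≤ c / 3 := by
      have : A v' - D v' = (A - D) v' := by simp
      rw [this]
      calc ‖(A - D) v'‖ ≤ ‖A - D‖ * ‖v'‖ := (A - D).le_opNorm v'
        _ = ‖A - D‖ := by rw [mem_sphere_zero_iff_norm.mp hv'sph.2, mul_one]
        _ ≤ c / 3 := le_of_lt hAD
    have hfst : ‖(A v').1 - (D v').1‖ ≤ c / 3 := by
      have : (A v').1 - (D v').1 = (A v' - D v').1 := rfl
      rw [this]
      exact le_trans (norm_fst_le _) hADv
    have hsnd : ‖(A v').2 - (D v').2‖ ≤ c / 3 := by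
      have : (A v').2 - (D v').2 = (A v' - D v').2 := rfl
      rw [this]
      exact le_trans (norm_snd_le _) hADv
    have hφkey : c ≤ ‖(A v').2‖ - ‖(A v').1‖ := hkey
    have hlt : ‖(D v').1‖ < ‖(D v').2‖ := by
      have t1 : ‖(D v').1‖ ≤ ‖(A v').1‖ + ‖(A v').1 - (D v').1‖ := by
        have := norm_sub_norm_le ((A v').1) ((D v').1)
        linarith [abs_le.mp (abs_norm_sub_norm_le ((A v').1) ((D v').1))]
      have t2 : ‖(A v').2‖ ≤ ‖(D v').2‖ + ‖(A v').2 - (D v').2‖ := by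
        linarith [abs_le.mp (abs_norm_sub_norm_le ((A v').2) ((D v').2))]
      linarith
    apply lt_subset_int_coneS
    show ‖(D v).1‖ < ‖(D v).2‖
    have hDv : D v = ‖v‖ • D v' := by
      rw [hv', map_smul, smul_smul, mul_inv_cancel₀ (ne_of_gt hvn), one_smul]
    have e1 : (D v).1 = ‖v‖ • (D v').1 := by rw [hDv]; rfl
    have e2 : (D v).2 = ‖v‖ • (D v').2 := by rw [hDv]; rfl
    rw [e1, e2, norm_smul, norm_smul]
    exact mul_lt_mul_of_pos_left hlt (by rwa [Real.norm_eq_abs, abs_of_pos hvn])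
  -- now assemble the three conditions
  refine ⟨?_, ?_, ?_⟩
  · -- g(B) ∩ ∂ˢB = ∅
    apply Set.eq_empty_iff_forall_notMem.mpr
    rintro x ⟨⟨z, hz, rfl⟩, hx2⟩
    have hm1 : g z ∈ Metric.thickening δ1 (f '' B) := by
      rw [Metric.mem_thickening_iff]
      refine ⟨f z, ⟨z, hz, rfl⟩, ?_⟩
      rw [dist_eq_norm, ← norm_neg]
      simp only [neg_sub]
      exact lt_of_lt_of_le (hgdist z hz).1 (min_le_left _ _)
    have hm2 : g z ∈ Metric.thickening δ1 ((frontier Bs) ×ˢ Bu) :=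
      Metric.self_subset_thickening hδ1 _ hx2
    exact Set.disjoint_left.mp hdisj1 hm1 hm2
  · -- B ∩ g(∂ᵘB) = ∅
    apply Set.eq_empty_iff_forall_notMem.mpr
    rintro x ⟨hxB, z, hz, rfl⟩
    have hm1 : g z ∈ Metric.thickening δ2 B := Metric.self_subset_thickening hδ2 _ hxB
    have hm2 : g z ∈ Metric.thickening δ2 (f '' (Bs ×ˢ frontier Bu)) := by
      rw [Metric.mem_thickening_iff]
      refine ⟨f z, ⟨z, hz, rfl⟩, ?_⟩
      rw [dist_eq_norm, ← norm_neg]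
      simp only [neg_sub]
      exact lt_of_lt_of_le (hgdist z (hdu hz)).1 (min_le_right _ _)
    exact Set.disjoint_left.mp hdisj2 hm1 hm2
  · intro z hz
    refine ⟨hcondS z hz, ?_⟩
    intro w hw
    rcases eq_or_ne w 0 with rfl | hwne
    · exact Or.inr rfl
    left
    obtain ⟨v, hv⟩ := (hgD z hz).surjective w
    refine ⟨v, ?_, hv⟩
    rcases Nat.eq_zero_or_pos s with hs | hs
    · exfalso
      subst hs
      apply hwne
      have hw2 : ‖w.2‖ ≤ ‖w.1‖ := hw
      rw [Subsingleton.elim w.1 0, norm_zero] at hw2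
      have : w.2 = 0 := norm_le_zero_iff.mp hw2
      exact Prod.ext (Subsingleton.elim _ _) this
    by_contra hvint
    have hvS : v ∈ coneS s u := by
      by_contra hvS
      apply hvint
      apply lt_subset_int_coneU
      show ‖v.2‖ < ‖v.1‖
      exact lt_of_not_ge fun hle => hvS hle
    have hw' := hcondS z hz ⟨v, hvS, hv⟩
    rcases hw' with hw' | hw'
    · have hlt := int_coneS_subset hs hw'
      have hw2 : ‖w.2‖ ≤ ‖w.1‖ := hw
      have hlt2 : ‖w.1‖ < ‖w.2‖ := hlt
      exact absurd hlt2 (not_lt.mpr hw2)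
    · exact hwne hw'
end
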